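/- Let ν ∈ ℝ³ with |ν| = 1 and ν_i ≠ 0 for i = 1, 2, 3, and let M be a symmetric real 9×9 matrix. Then M is an admissible boundary matrix for A_ν if and only if there exist a symmetric positive definite real 3×3 matrix S₁ and a skew-symmetric real 3×3 matrix S₂ such that S₁ + S₂ and S₁ − S₂ are invertible and, for every v ∈ ℝ³ and every symmetric real 3×3 matrix σ, with U(v,σ) := (v, C̃^{−1/2} σ'_pr, μ^{−1/2} σ''_pr) ∈ ℝ⁹: (A_ν + M) · U(v,σ) = 0 if and only if (S₁ + S₂) v − σν = 0, and (A_ν − M) · U(v,σ) = 0 if and only if (S₁ − S₂) v + σν = 0. -/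

import Mathlib

open Matrix

/-- Index type for `9 = 3 + 3 + 3` block vectors/matrices. -/
abbrev I9 := Fin 3 ⊕ (Fin 3 ⊕ Fin 3)

noncomputable def alph (lam mu : ℝ) : ℝ :=
  (2 * Real.sqrt (2 * mu) + Real.sqrt (2 * mu + 3 * lam)) / 3

noncomputable def bet (lam mu : ℝ) : ℝ :=
  (- Real.sqrt (2 * mu) + Real.sqrt (2 * mu + 3 * lam)) / 3

/-- The matrix `A'_ν`. -/
noncomputable def Ap (lam mu : ℝ) (ν : Fin 3 → ℝ) : Matrix (Fin 3) (Fin 3) ℝ :=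
  - !![ν 0 * alph lam mu, ν 0 * bet lam mu, ν 0 * bet lam mu;
       ν 1 * bet lam mu, ν 1 * alph lam mu, ν 1 * bet lam mu;
       ν 2 * bet lam mu, ν 2 * bet lam mu, ν 2 * alph lam mu]

/-- The matrix `A''_ν`. -/
noncomputable def App (mu : ℝ) (ν : Fin 3 → ℝ) : Matrix (Fin 3) (Fin 3) ℝ :=
  (- Real.sqrt mu) • !![ν 1, ν 2, 0; ν 0, 0, ν 2; 0, ν 0, ν 1]

/-- The symmetric `9 × 9` matrix `A_ν` in `3 × 3` block form. -/
noncomputable def Anu (lam mu : ℝ) (ν : Fin 3 → ℝ) : Matrix I9 I9 ℝ :=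
  Matrix.fromBlocks 0 (Matrix.fromCols (Ap lam mu ν) (App mu ν))
    (Matrix.fromRows (Ap lam mu ν)ᵀ (App mu ν)ᵀ) 0

/-- The block `M₁ = M[1..3,1..3]` of a `9 × 9` matrix. -/
def blk₁ (M : Matrix I9 I9 ℝ) : Matrix (Fin 3) (Fin 3) ℝ := M.submatrix Sum.inl Sum.inl

/-- The block `M₂ = M[1..3,4..6]`. -/
def blk₂ (M : Matrix I9 I9 ℝ) : Matrix (Fin 3) (Fin 3) ℝ :=
  M.submatrix Sum.inl (Sum.inr ∘ Sum.inl)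

/-- The block `M₂' = M[1..3,7..9]`. -/
def blk₂' (M : Matrix I9 I9 ℝ) : Matrix (Fin 3) (Fin 3) ℝ :=
  M.submatrix Sum.inl (Sum.inr ∘ Sum.inr)

/-- The block `M₃ = M[4..6,4..6]`. -/
def blk₃ (M : Matrix I9 I9 ℝ) : Matrix (Fin 3) (Fin 3) ℝ :=
  M.submatrix (Sum.inr ∘ Sum.inl) (Sum.inr ∘ Sum.inl)

/-- The block `M₃' = M[4..6,7..9]`. -/
def blk₃' (M : Matrix I9 I9 ℝ) : Matrix (Fin 3) (Fin 3) ℝ :=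
  M.submatrix (Sum.inr ∘ Sum.inl) (Sum.inr ∘ Sum.inr)

/-- The block `M₃'' = M[7..9,7..9]`. -/
def blk₃'' (M : Matrix I9 I9 ℝ) : Matrix (Fin 3) (Fin 3) ℝ :=
  M.submatrix (Sum.inr ∘ Sum.inr) (Sum.inr ∘ Sum.inr)

/-- `M` is an admissible boundary matrix for `A`: `M` is symmetric positive semidefinite,
`Ker A ⊆ Ker M`, and `Ker (A - M) + Ker (A + M) = ℝ⁹`. -/
def IsAdmissible (A M : Matrix I9 I9 ℝ) : Prop :=
  M.IsSymm ∧ M.PosSemidef ∧ (∀ x : I9 → ℝ, A.mulVec x = 0 → M.mulVec x = 0) ∧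
    LinearMap.ker (A - M).mulVecLin ⊔ LinearMap.ker (A + M).mulVecLin = ⊤

/-- The matrix `C̃^γ`, with diagonal entries `α_γ` and off-diagonal entries `β_γ`. -/
noncomputable def Cpow (lam mu γ : ℝ) : Matrix (Fin 3) (Fin 3) ℝ :=
  Matrix.of fun i j =>
    if i = j then (2 * (2 * mu) ^ γ + (2 * mu + 3 * lam) ^ γ) / 3
    else (- (2 * mu) ^ γ + (2 * mu + 3 * lam) ^ γ) / 3

/-- The vector `U(v,σ) = (v, C̃^{-1/2} σ'_pr, μ^{-1/2} σ''_pr) ∈ ℝ⁹`. -/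
noncomputable def Uvec (lam mu : ℝ) (v : Fin 3 → ℝ) (σ : Matrix (Fin 3) (Fin 3) ℝ) : I9 → ℝ :=
  Sum.elim v
    (Sum.elim ((Cpow lam mu (-(1/2))).mulVec ![σ 0 0, σ 1 1, σ 2 2])
      (fun i => mu ^ (-(1/2) : ℝ) * ![σ 0 1, σ 0 2, σ 1 2] i))


noncomputable def Chalf (lam mu : ℝ) : Matrix (Fin 3) (Fin 3) ℝ :=
  Matrix.of fun i j => if i = j then alph lam mu else bet lam mu

lemma sqrt_mul_rpow {x : ℝ} (hx : 0 < x) : Real.sqrt x * x ^ (-(1/2) : ℝ) = 1 := by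
  rw [Real.rpow_neg hx.le, Real.sqrt_eq_rpow]
  exact mul_inv_cancel₀ (by positivity)

lemma aux_prod (a b a' b' : ℝ) (h1 : a * a' = 1) (h2 : b * b' = 1) :
    (Matrix.of fun i j : Fin 3 => if i = j then (2*a'+b')/3 else (-a'+b')/3) *
      (Matrix.of fun i j : Fin 3 => if i = j then (2*a+b)/3 else (-a+b)/3) = 1 := by
  ext i j
  fin_cases i <;> fin_cases j <;>
    simp [Matrix.mul_apply, Fin.sum_univ_three, Matrix.one_apply] <;>
    first
      | linear_combination (2/3 : ℝ) * h1 + (1/3 : ℝ) * h2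
      | linear_combination (-1/3 : ℝ) * h1 + (1/3 : ℝ) * h2

lemma aux_prod' (a b a' b' : ℝ) (h1 : a * a' = 1) (h2 : b * b' = 1) :
    (Matrix.of fun i j : Fin 3 => if i = j then (2*a+b)/3 else (-a+b)/3) *
      (Matrix.of fun i j : Fin 3 => if i = j then (2*a'+b')/3 else (-a'+b')/3) = 1 := by
  ext i j
  fin_cases i <;> fin_cases j <;>
    simp [Matrix.mul_apply, Fin.sum_univ_three, Matrix.one_apply] <;>
    first
      | linear_combination (2/3 : ℝ) * h1 + (1/3 : ℝ) * h2
      | linear_combination (-1/3 : ℝ) * h1 + (1/3 : ℝ) * h2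

lemma Cpow_eq (lam mu : ℝ) : Cpow lam mu (-(1/2)) =
    Matrix.of fun i j : Fin 3 => if i = j then
      (2 * (2*mu) ^ (-(1/2):ℝ) + (2*mu+3*lam) ^ (-(1/2):ℝ))/3
    else (-((2*mu) ^ (-(1/2):ℝ)) + (2*mu+3*lam) ^ (-(1/2):ℝ))/3 := rfl

lemma Chalf_eq (lam mu : ℝ) : Chalf lam mu =
    Matrix.of fun i j : Fin 3 => if i = j then
      (2 * Real.sqrt (2*mu) + Real.sqrt (2*mu+3*lam))/3
    else (-(Real.sqrt (2*mu)) + Real.sqrt (2*mu+3*lam))/3 := rfl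

lemma Cmul {lam mu : ℝ} (hmu : 0 < mu) (hlm : 0 < 2 * mu + 3 * lam) :
    Cpow lam mu (-(1/2)) * Chalf lam mu = 1 := by
  rw [Cpow_eq, Chalf_eq]
  exact aux_prod _ _ _ _ (sqrt_mul_rpow (by linarith)) (sqrt_mul_rpow hlm)

lemma Cmul' {lam mu : ℝ} (hmu : 0 < mu) (hlm : 0 < 2 * mu + 3 * lam) :
    Chalf lam mu * Cpow lam mu (-(1/2)) = 1 := by
  rw [Cpow_eq, Chalf_eq]
  exact aux_prod' _ _ _ _ (sqrt_mul_rpow (by linarith)) (sqrt_mul_rpow hlm)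

lemma vec3_eta (p : Fin 3 → ℝ) : ![p 0, p 1, p 2] = p := by
  funext i; fin_cases i <;> simp

lemma Ap_eq (lam mu : ℝ) (ν : Fin 3 → ℝ) :
    Ap lam mu ν = -(Matrix.diagonal ν * Chalf lam mu) := by
  ext i j
  fin_cases i <;> fin_cases j <;>
    simp [Ap, Chalf, Matrix.diagonal_mul, alph, bet]

lemma Ap_mul_C {lam mu : ℝ} (hmu : 0 < mu) (hlm : 0 < 2 * mu + 3 * lam) (ν : Fin 3 → ℝ) :
    Ap lam mu ν * Cpow lam mu (-(1/2)) = -(Matrix.diagonal ν) := by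
  rw [Ap_eq, Matrix.neg_mul, Matrix.mul_assoc, Cmul' hmu hlm, Matrix.mul_one]

lemma Apt_inj {lam mu : ℝ} (hmu : 0 < mu) (hlm : 0 < 2 * mu + 3 * lam) {ν : Fin 3 → ℝ}
    (hν0 : ∀ i, ν i ≠ 0) {u : Fin 3 → ℝ} (h : (Ap lam mu ν)ᵀ.mulVec u = 0) : u = 0 := by
  have hC : (Chalf lam mu)ᵀ = Chalf lam mu := by
    ext i j; fin_cases i <;> fin_cases j <;> simp [Chalf, Matrix.transpose_apply]
  have h2 : (Chalf lam mu).mulVec ((Matrix.diagonal ν).mulVec u) = 0 := by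
    rw [Ap_eq, Matrix.transpose_neg, Matrix.transpose_mul, hC, Matrix.diagonal_transpose,
      Matrix.neg_mulVec, neg_eq_zero, ← Matrix.mulVec_mulVec] at h
    exact h
  have h3 : (Matrix.diagonal ν).mulVec u = 0 := by
    have h4 := congrArg (fun z => (Cpow lam mu (-(1/2))).mulVec z) h2
    simp only [Matrix.mulVec_mulVec, Matrix.mulVec_zero] at h4
    rw [← Matrix.mul_assoc, Cmul hmu hlm, Matrix.one_mul] at h4
    exact h4
  funext i
  have := congrFun h3 i
  simp [Matrix.mulVec_diagonal] at this
  rcases this with h | h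
  · exact absurd h (hν0 i)
  · exact h

lemma Anu_mulVec_U {lam mu : ℝ} (hmu : 0 < mu) (hlm : 0 < 2 * mu + 3 * lam)
    (ν : Fin 3 → ℝ) (v : Fin 3 → ℝ) (σ : Matrix (Fin 3) (Fin 3) ℝ) (hσ : σ.IsSymm) :
    (Anu lam mu ν).mulVec (Uvec lam mu v σ) =
      Sum.elim (-(σ.mulVec ν))
        (Sum.elim ((Ap lam mu ν)ᵀ.mulVec v) ((App mu ν)ᵀ.mulVec v)) := by
  have h0 : Uvec lam mu v σ = Sum.elim v
      (Sum.elim ((Cpow lam mu (-(1/2))).mulVec ![σ 0 0, σ 1 1, σ 2 2])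
        ((mu ^ (-(1/2) : ℝ)) • ![σ 0 1, σ 0 2, σ 1 2])) := rfl
  rw [Anu, h0, Matrix.fromBlocks_mulVec]
  simp only [Sum.elim_comp_inl, Sum.elim_comp_inr, Matrix.zero_mulVec, add_zero, zero_add]
  congr 1
  · rw [Matrix.fromCols_mulVec_sumElim]
    have e1 : Ap lam mu ν *ᵥ ((Cpow lam mu (-(1/2))).mulVec ![σ 0 0, σ 1 1, σ 2 2])
        = -(Matrix.diagonal ν *ᵥ ![σ 0 0, σ 1 1, σ 2 2]) := by
      rw [Matrix.mulVec_mulVec, Ap_mul_C hmu hlm, Matrix.neg_mulVec]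
    have e2 : App mu ν *ᵥ ((mu ^ (-(1/2) : ℝ)) • ![σ 0 1, σ 0 2, σ 1 2])
        = -(!![ν 1, ν 2, 0; ν 0, 0, ν 2; 0, ν 0, ν 1] *ᵥ ![σ 0 1, σ 0 2, σ 1 2]) := by
      rw [App, Matrix.smul_mulVec, Matrix.mulVec_smul, smul_smul,
        show -Real.sqrt mu * mu ^ (-(1/2) : ℝ) = -1 by
          have := sqrt_mul_rpow hmu; linarith]
      exact neg_one_smul ℝ _
    rw [e1, e2]
    have s10 : σ 1 0 = σ 0 1 := hσ.apply 0 1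
    have s20 : σ 2 0 = σ 0 2 := hσ.apply 0 2
    have s21 : σ 2 1 = σ 1 2 := hσ.apply 1 2
    funext i
    fin_cases i <;>
      simp [Matrix.mulVec, dotProduct, Fin.sum_univ_three, Matrix.mulVec_diagonal,
        s10, s20, s21] <;> ring
  · exact Matrix.fromRows_mulVec _ _ _

/-- An explicit symmetric matrix with `σ ν = w` (assuming `|ν| = 1`). -/
def sigw (ν w : Fin 3 → ℝ) : Matrix (Fin 3) (Fin 3) ℝ :=
  Matrix.of fun i j =>
    w i * ν j + ν i * w j - (ν 0 * w 0 + ν 1 * w 1 + ν 2 * w 2) * (ν i * ν j)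

lemma sigw_isSymm (ν w : Fin 3 → ℝ) : (sigw ν w).IsSymm := by
  ext i j; simp [sigw, Matrix.transpose_apply]; ring

lemma sigw_mulVec {ν : Fin 3 → ℝ} (hν : ν 0 ^ 2 + ν 1 ^ 2 + ν 2 ^ 2 = 1) (w : Fin 3 → ℝ) :
    (sigw ν w).mulVec ν = w := by
  funext i
  fin_cases i <;>
    simp [sigw, Matrix.mulVec, dotProduct, Fin.sum_univ_three] <;>
    first
    | linear_combination (w 0 - (ν 0 * w 0 + ν 1 * w 1 + ν 2 * w 2) * ν 0) * hν
    | linear_combination (w 1 - (ν 0 * w 0 + ν 1 * w 1 + ν 2 * w 2) * ν 1) * hν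
    | linear_combination (w 2 - (ν 0 * w 0 + ν 1 * w 1 + ν 2 * w 2) * ν 2) * hν

lemma Uvec_add (lam mu : ℝ) (v v' : Fin 3 → ℝ) (σ σ' : Matrix (Fin 3) (Fin 3) ℝ) :
    Uvec lam mu (v + v') (σ + σ') = Uvec lam mu v σ + Uvec lam mu v' σ' := by
  funext z
  rcases z with i | z
  · rfl
  rcases z with i | i <;> fin_cases i <;>
    simp [Uvec, Matrix.mulVec, dotProduct, Fin.sum_univ_three] <;> ring

lemma exists_U {lam mu : ℝ} (hmu : 0 < mu) (hlm : 0 < 2 * mu + 3 * lam) (x : I9 → ℝ) :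
    ∃ (v : Fin 3 → ℝ) (σ : Matrix (Fin 3) (Fin 3) ℝ),
      σ.IsSymm ∧ Uvec lam mu v σ = x := by
  set p : Fin 3 → ℝ := (Chalf lam mu).mulVec (fun i => x (Sum.inr (Sum.inl i))) with hp
  set q : Fin 3 → ℝ := fun i => Real.sqrt mu * x (Sum.inr (Sum.inr i)) with hq
  refine ⟨fun i => x (Sum.inl i), !![p 0, q 0, q 1; q 0, p 1, q 2; q 1, q 2, p 2], ?_, ?_⟩
  · ext i j; fin_cases i <;> fin_cases j <;> simp
  · have h1 : ![(!![p 0, q 0, q 1; q 0, p 1, q 2; q 1, q 2, p 2] : Matrix (Fin 3) (Fin 3) ℝ) 0 0,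
        !![p 0, q 0, q 1; q 0, p 1, q 2; q 1, q 2, p 2] 1 1,
        !![p 0, q 0, q 1; q 0, p 1, q 2; q 1, q 2, p 2] 2 2] = p := by
      funext i; fin_cases i <;> simp
    have h2 : ![(!![p 0, q 0, q 1; q 0, p 1, q 2; q 1, q 2, p 2] : Matrix (Fin 3) (Fin 3) ℝ) 0 1,
        !![p 0, q 0, q 1; q 0, p 1, q 2; q 1, q 2, p 2] 0 2,
        !![p 0, q 0, q 1; q 0, p 1, q 2; q 1, q 2, p 2] 1 2] = q := by
      funext i; fin_cases i <;> simp
    funext z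
    rcases z with i | z
    · rfl
    rcases z with i | i
    · show ((Cpow lam mu (-(1/2))).mulVec _) i = _
      rw [h1, hp, Matrix.mulVec_mulVec, Cmul hmu hlm, Matrix.one_mulVec]
    · show mu ^ (-(1/2) : ℝ) * _ = _
      rw [h2, hq]
      have h3 := sqrt_mul_rpow hmu
      show mu ^ (-(1/2) : ℝ) * (Real.sqrt mu * x (Sum.inr (Sum.inr i))) = _
      rw [← mul_assoc, mul_comm (mu ^ (-(1/2):ℝ)), h3, one_mul]

lemma Anu_isSymm (lam mu : ℝ) (ν : Fin 3 → ℝ) : (Anu lam mu ν)ᵀ = Anu lam mu ν := by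
  rw [Anu, Matrix.fromBlocks_transpose, Matrix.transpose_fromCols,
    Matrix.transpose_fromRows, Matrix.transpose_transpose, Matrix.transpose_transpose,
    Matrix.transpose_zero, Matrix.transpose_zero]

lemma dotA (lam mu : ℝ) (ν : Fin 3 → ℝ) (x y : I9 → ℝ) :
    ((Anu lam mu ν).mulVec x) ⬝ᵥ y =
      (fun i => ((Anu lam mu ν).mulVec x) (Sum.inl i)) ⬝ᵥ (fun i => y (Sum.inl i)) +
        (fun i => x (Sum.inl i)) ⬝ᵥ (fun i => ((Anu lam mu ν).mulVec y) (Sum.inl i)) := by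
  simp only [dotProduct, Matrix.mulVec, Fintype.sum_sum_type, Anu,
    Matrix.fromBlocks_apply₁₁, Matrix.fromBlocks_apply₁₂, Matrix.fromBlocks_apply₂₁,
    Matrix.fromBlocks_apply₂₂, Fin.sum_univ_three, Matrix.fromCols_apply_inl, Matrix.fromCols_apply_inr,
    Matrix.fromRows_apply_inl, Matrix.fromRows_apply_inr, Matrix.zero_apply, Matrix.transpose_apply, Matrix.of_apply,
    Sum.elim_inl, Sum.elim_inr]
  ring

lemma skew_dot {S : Matrix (Fin 3) (Fin 3) ℝ} (h : Sᵀ = -S) (v : Fin 3 → ℝ) :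
    v ⬝ᵥ (S.mulVec v) = 0 := by
  have h1 : v ⬝ᵥ (S.mulVec v) = (Sᵀ.mulVec v) ⬝ᵥ v := by
    rw [Matrix.mulVec_transpose, Matrix.dotProduct_mulVec]
  rw [h, Matrix.neg_mulVec, neg_dotProduct, dotProduct_comm] at h1
  rw [dotProduct_comm]
  linarith

lemma symm_dot {S : Matrix I9 I9 ℝ} (h : Sᵀ = S) (v w : I9 → ℝ) :
    v ⬝ᵥ (S.mulVec w) = (S.mulVec v) ⬝ᵥ w := by
  rw [Matrix.dotProduct_mulVec, ← Matrix.mulVec_transpose, h]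

/-- value of `Φ` on `Uvec`: first component. -/
lemma U_inl (lam mu : ℝ) (v : Fin 3 → ℝ) (σ : Matrix (Fin 3) (Fin 3) ℝ) :
    (fun i => Uvec lam mu v σ (Sum.inl i)) = v := rfl

lemma AU_inl {lam mu : ℝ} (hmu : 0 < mu) (hlm : 0 < 2 * mu + 3 * lam)
    (ν : Fin 3 → ℝ) (v : Fin 3 → ℝ) {σ : Matrix (Fin 3) (Fin 3) ℝ} (hσ : σ.IsSymm) :
    (fun i => ((Anu lam mu ν).mulVec (Uvec lam mu v σ)) (Sum.inl i)) = -(σ.mulVec ν) := by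
  funext i; rw [Anu_mulVec_U hmu hlm ν v σ hσ]; rfl

/-- quadratic form of `A` on `U(v,σ)`. -/
lemma quadA_U {lam mu : ℝ} (hmu : 0 < mu) (hlm : 0 < 2 * mu + 3 * lam)
    (ν : Fin 3 → ℝ) (v : Fin 3 → ℝ) {σ : Matrix (Fin 3) (Fin 3) ℝ} (hσ : σ.IsSymm) :
    ((Anu lam mu ν).mulVec (Uvec lam mu v σ)) ⬝ᵥ (Uvec lam mu v σ)
      = -(2 * (v ⬝ᵥ σ.mulVec ν)) := by
  rw [dotA lam mu ν, AU_inl hmu hlm ν v hσ, U_inl, neg_dotProduct,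
    dotProduct_neg, dotProduct_comm]
  ring

lemma backward {lam mu : ℝ} (hmu : 0 < mu) (hlm : 0 < 2 * mu + 3 * lam)
    {ν : Fin 3 → ℝ} (hν : ν 0 ^ 2 + ν 1 ^ 2 + ν 2 ^ 2 = 1) (hν0 : ∀ i : Fin 3, ν i ≠ 0)
    {M : Matrix I9 I9 ℝ} (hMsymm : M.IsSymm)
    (S₁ S₂ : Matrix (Fin 3) (Fin 3) ℝ) (hS1 : S₁.PosDef) (hS2 : S₂ᵀ = -S₂)
    (hu1 : IsUnit (S₁ + S₂).det) (hu2 : IsUnit (S₁ - S₂).det)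
    (H : ∀ (v : Fin 3 → ℝ) (σ : Matrix (Fin 3) (Fin 3) ℝ), σ.IsSymm →
          (((Anu lam mu ν) + M).mulVec (Uvec lam mu v σ) = 0 ↔
              (S₁ + S₂).mulVec v - σ.mulVec ν = 0) ∧
          (((Anu lam mu ν) - M).mulVec (Uvec lam mu v σ) = 0 ↔
              (S₁ - S₂).mulVec v + σ.mulVec ν = 0)) :
    IsAdmissible (Anu lam mu ν) M := by
  set A := Anu lam mu ν with hA
  have hS1det : IsUnit S₁.det := isUnit_iff_ne_zero.mpr (ne_of_gt hS1.det_pos)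
  -- decomposition of an arbitrary vector
  have decomp : ∀ x : I9 → ℝ, ∃ (v₁ v₂ : Fin 3 → ℝ) (σ₁ σ₂ : Matrix (Fin 3) (Fin 3) ℝ),
      σ₁.IsSymm ∧ σ₂.IsSymm ∧ x = Uvec lam mu v₁ σ₁ + Uvec lam mu v₂ σ₂ ∧
      (S₁ + S₂).mulVec v₁ - σ₁.mulVec ν = 0 ∧
      (S₁ - S₂).mulVec v₂ + σ₂.mulVec ν = 0 := by
    intro x
    obtain ⟨v, σ, hσ, hU⟩ := exists_U hmu hlm x
    set w := σ.mulVec ν with hw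
    set v₁ := S₁⁻¹.mulVec ((1/2 : ℝ) • ((S₁ - S₂).mulVec v + w)) with hv₁
    have key : S₁.mulVec v₁ + S₁.mulVec v₁ = S₁.mulVec v - S₂.mulVec v + w := by
      have h0 : S₁.mulVec v₁ = (S₁ * S₁⁻¹).mulVec ((1/2 : ℝ) • ((S₁ - S₂).mulVec v + w)) := by
        rw [hv₁, Matrix.mulVec_mulVec]
      rw [Matrix.mul_nonsing_inv _ hS1det, Matrix.one_mulVec] at h0
      rw [h0]
      funext i
      have e := congrFun (Matrix.sub_mulVec S₁ S₂ v) i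
      simp only [Pi.add_apply, Pi.sub_apply, Pi.smul_apply, smul_eq_mul] at *
      rw [e]; ring
    set v₂ := v - v₁ with hv₂
    set σ₁ := sigw ν ((S₁ + S₂).mulVec v₁) with hσ₁
    set σ₂ := σ - σ₁ with hσ₂
    have hσ₁ν : σ₁.mulVec ν = (S₁ + S₂).mulVec v₁ := sigw_mulVec hν _
    refine ⟨v₁, v₂, σ₁, σ₂, sigw_isSymm _ _, hσ.sub (sigw_isSymm _ _), ?_, ?_, ?_⟩
    · rw [← Uvec_add, hv₂, hσ₂]
      have : v₁ + (v - v₁) = v := by abel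
      rw [this]
      have : σ₁ + (σ - σ₁) = σ := by abel
      rw [this, hU]
    · rw [hσ₁ν, sub_self]
    · have hσ₂ν : σ₂.mulVec ν = w - (S₁ + S₂).mulVec v₁ := by
        rw [hσ₂, Matrix.sub_mulVec, hσ₁ν]
      rw [hσ₂ν]
      funext i
      have k := congrFun key i
      have e1 := congrFun (Matrix.sub_mulVec S₁ S₂ v₂) i
      have e2 := congrFun (Matrix.mulVec_sub S₁ v v₁) i
      have e3 := congrFun (Matrix.mulVec_sub S₂ v v₁) i
      have e4 := congrFun (Matrix.add_mulVec S₁ S₂ v₁) i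
      simp only [Pi.add_apply, Pi.sub_apply, Pi.zero_apply, hv₂] at *
      linarith
  constructor
  · exact hMsymm
  have hMH : M.IsHermitian := by
    rw [Matrix.IsHermitian, Matrix.conjTranspose_eq_transpose_of_trivial]; exact hMsymm
  have hAsymm := Anu_isSymm lam mu ν
  -- key membership facts
  have memV : ∀ (v : Fin 3 → ℝ) (σ : Matrix (Fin 3) (Fin 3) ℝ), σ.IsSymm →
      ((S₁ + S₂).mulVec v - σ.mulVec ν = 0 → M.mulVec (Uvec lam mu v σ) = -(A.mulVec (Uvec lam mu v σ)))
      ∧ ((S₁ - S₂).mulVec v + σ.mulVec ν = 0 → M.mulVec (Uvec lam mu v σ) = A.mulVec (Uvec lam mu v σ)) := by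
    intro v σ hσ
    constructor
    · intro h
      have := (H v σ hσ).1.mpr h
      rw [Matrix.add_mulVec] at this
      funext i; have := congrFun this i
      simp only [Pi.add_apply, Pi.zero_apply, Pi.neg_apply] at *
      linarith
    · intro h
      have := (H v σ hσ).2.mpr h
      rw [Matrix.sub_mulVec] at this
      funext i; have := congrFun this i
      simp only [Pi.sub_apply, Pi.zero_apply] at *
      linarith
  refine ⟨.of_dotProduct_mulVec_nonneg hMH ?_, ?_, ?_⟩
  · -- positive semidefiniteness
    intro x
    obtain ⟨v₁, v₂, σ₁, σ₂, hσ₁, hσ₂, hx, hc₁, hc₂⟩ := decomp x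
    set x₁ := Uvec lam mu v₁ σ₁ with hx₁
    set x₂ := Uvec lam mu v₂ σ₂ with hx₂
    have hm₁ : M.mulVec x₁ = -(A.mulVec x₁) := (memV v₁ σ₁ hσ₁).1 hc₁
    have hm₂ : M.mulVec x₂ = A.mulVec x₂ := (memV v₂ σ₂ hσ₂).2 hc₂
    have cross : x₁ ⬝ᵥ (A.mulVec x₂) = x₂ ⬝ᵥ (A.mulVec x₁) := by
      rw [symm_dot hAsymm, dotProduct_comm]
    have q₁ : x₁ ⬝ᵥ M.mulVec x₁ = 2 * (v₁ ⬝ᵥ σ₁.mulVec ν) := by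
      rw [hm₁, dotProduct_neg, dotProduct_comm, hx₁,
        quadA_U hmu hlm ν v₁ hσ₁]
      ring
    have q₂ : x₂ ⬝ᵥ M.mulVec x₂ = -(2 * (v₂ ⬝ᵥ σ₂.mulVec ν)) := by
      rw [hm₂, dotProduct_comm, hx₂, quadA_U hmu hlm ν v₂ hσ₂]
    have hσ₁ν : σ₁.mulVec ν = (S₁ + S₂).mulVec v₁ := by
      funext i; have := congrFun hc₁ i
      simp only [Pi.sub_apply, Pi.zero_apply] at this; linarith
    have hσ₂ν : σ₂.mulVec ν = -((S₁ - S₂).mulVec v₂) := by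
      funext i; have := congrFun hc₂ i
      simp only [Pi.add_apply, Pi.zero_apply, Pi.neg_apply] at *; linarith
    have e₁ : v₁ ⬝ᵥ σ₁.mulVec ν = v₁ ⬝ᵥ S₁.mulVec v₁ := by
      rw [hσ₁ν, Matrix.add_mulVec, dotProduct_add, skew_dot hS2, add_zero]
    have e₂ : v₂ ⬝ᵥ σ₂.mulVec ν = -(v₂ ⬝ᵥ S₁.mulVec v₂) := by
      rw [hσ₂ν, dotProduct_neg, Matrix.sub_mulVec, dotProduct_sub,
        skew_dot hS2, sub_zero]
    have pos₁ : 0 ≤ v₁ ⬝ᵥ S₁.mulVec v₁ := by simpa using hS1.posSemidef.dotProduct_mulVec_nonneg v₁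
    have pos₂ : 0 ≤ v₂ ⬝ᵥ S₁.mulVec v₂ := by simpa using hS1.posSemidef.dotProduct_mulVec_nonneg v₂
    have cross2 : x₁ ⬝ᵥ M.mulVec x₂ + x₂ ⬝ᵥ M.mulVec x₁ = 0 := by
      rw [hm₁, hm₂, dotProduct_neg, cross]; ring
    have expand : x ⬝ᵥ M.mulVec x =
        x₁ ⬝ᵥ M.mulVec x₁ + (x₁ ⬝ᵥ M.mulVec x₂ + x₂ ⬝ᵥ M.mulVec x₁) + x₂ ⬝ᵥ M.mulVec x₂ := by
      rw [hx, Matrix.mulVec_add, add_dotProduct, dotProduct_add,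
        dotProduct_add]
      ring
    have : (0:ℝ) ≤ x ⬝ᵥ M.mulVec x := by
      rw [expand, cross2, q₁, q₂, e₁, e₂]; linarith
    simpa using this
  · -- kernel inclusion
    intro x hx
    obtain ⟨v, σ, hσ, hU⟩ := exists_U hmu hlm x
    rw [← hU] at hx
    rw [Anu_mulVec_U hmu hlm ν v σ hσ] at hx
    have hσν : σ.mulVec ν = 0 := by
      funext i
      have h := congrFun hx (Sum.inl i)
      simpa using h
    have hv : (Ap lam mu ν)ᵀ.mulVec v = 0 := by
      funext i; exact congrFun hx (Sum.inr (Sum.inl i))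
    have hv0 : v = 0 := Apt_inj hmu hlm hν0 hv
    have hcond : (S₁ + S₂).mulVec v - σ.mulVec ν = 0 := by
      rw [hv0, Matrix.mulVec_zero, hσν, sub_zero]
    have hAM := (H v σ hσ).1.mpr hcond
    rw [Matrix.add_mulVec] at hAM
    have hAx : A.mulVec (Uvec lam mu v σ) = 0 := by
      rw [hA, Anu_mulVec_U hmu hlm ν v σ hσ]
      funext z
      rcases z with i | z
      · simp [congrFun hσν i]
      · exact congrFun hx (Sum.inr z)
    rw [← hU]
    funext i
    have h1 := congrFun hAM i
    have h2 := congrFun hAx i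
    simp only [Pi.add_apply, Pi.zero_apply] at *
    linarith
  · -- span condition
    rw [eq_top_iff]
    intro x _
    obtain ⟨v₁, v₂, σ₁, σ₂, hσ₁, hσ₂, hx, hc₁, hc₂⟩ := decomp x
    refine Submodule.mem_sup.mpr ⟨Uvec lam mu v₂ σ₂, ?_, Uvec lam mu v₁ σ₁, ?_, ?_⟩
    · rw [LinearMap.mem_ker, Matrix.mulVecLin_apply]
      exact (H v₂ σ₂ hσ₂).2.mpr hc₂
    · rw [LinearMap.mem_ker, Matrix.mulVecLin_apply]
      exact (H v₁ σ₁ hσ₁).1.mpr hc₁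
    · rw [hx]; abel


lemma dot_transpose (N : Matrix (Fin 3) (Fin 3) ℝ) (p p' : Fin 3 → ℝ) :
    p ⬝ᵥ (Nᵀ.mulVec p') = (N.mulVec p) ⬝ᵥ p' := by
  rw [Matrix.dotProduct_mulVec, Matrix.vecMul_transpose]

lemma bilinear_transpose {T₁ T₂ : Matrix (Fin 3) (Fin 3) ℝ}
    (h : ∀ p p', (T₁.mulVec p) ⬝ᵥ p' + p ⬝ᵥ (T₂.mulVec p') = 0) : T₁ᵀ = -T₂ := by
  ext i j
  have := h (Pi.single i 1) (Pi.single j 1)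
  simp [Matrix.mulVec_single, dotProduct_single, single_dotProduct] at this
  simp [Matrix.transpose_apply]
  linarith

lemma Anu_bot1 (lam mu : ℝ) (ν : Fin 3 → ℝ) (x : I9 → ℝ) (i : Fin 3) :
    ((Anu lam mu ν).mulVec x) (Sum.inr (Sum.inl i)) =
      ((Ap lam mu ν)ᵀ.mulVec (fun j => x (Sum.inl j))) i := by
  simp [Anu, Matrix.mulVec, dotProduct, Fintype.sum_sum_type,
    Matrix.fromBlocks_apply₂₁, Matrix.fromBlocks_apply₂₂, Matrix.fromRows_apply_inl, Matrix.fromRows_apply_inr,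
    Matrix.transpose_apply]

lemma Anu_bot2 (lam mu : ℝ) (ν : Fin 3 → ℝ) (x : I9 → ℝ) (i : Fin 3) :
    ((Anu lam mu ν).mulVec x) (Sum.inr (Sum.inr i)) =
      ((App mu ν)ᵀ.mulVec (fun j => x (Sum.inl j))) i := by
  simp [Anu, Matrix.mulVec, dotProduct, Fintype.sum_sum_type,
    Matrix.fromBlocks_apply₂₁, Matrix.fromBlocks_apply₂₂, Matrix.fromRows_apply_inl, Matrix.fromRows_apply_inr,
    Matrix.transpose_apply]

lemma kerA_iff {lam mu : ℝ} (hmu : 0 < mu) (hlm : 0 < 2 * mu + 3 * lam)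
    {ν : Fin 3 → ℝ} (hν0 : ∀ i, ν i ≠ 0) (x : I9 → ℝ) :
    (Anu lam mu ν).mulVec x = 0 ↔
      ((fun i => x (Sum.inl i)) = 0 ∧
        (fun i => ((Anu lam mu ν).mulVec x) (Sum.inl i)) = 0) := by
  constructor
  · intro h
    constructor
    · apply Apt_inj hmu hlm hν0
      funext i
      rw [← Anu_bot1 lam mu ν x i]
      exact congrFun h (Sum.inr (Sum.inl i))
    · funext i; exact congrFun h (Sum.inl i)
  · rintro ⟨h1, h2⟩
    funext z
    rcases z with i | z
    · exact congrFun h2 i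
    rcases z with i | i
    · rw [Anu_bot1 lam mu ν x i, h1, Matrix.mulVec_zero]; rfl
    · rw [Anu_bot2 lam mu ν x i, h1, Matrix.mulVec_zero]; rfl

noncomputable def PhiMap (lam mu : ℝ) (ν : Fin 3 → ℝ) :
    (I9 → ℝ) →ₗ[ℝ] ((Fin 3 → ℝ) × (Fin 3 → ℝ)) :=
  (LinearMap.funLeft ℝ ℝ Sum.inl).prod
    ((-(LinearMap.funLeft ℝ ℝ Sum.inl)).comp (Anu lam mu ν).mulVecLin)

lemma PhiMap_apply (lam mu : ℝ) (ν : Fin 3 → ℝ) (x : I9 → ℝ) :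
    PhiMap lam mu ν x =
      (fun i => x (Sum.inl i), fun i => -(((Anu lam mu ν).mulVec x) (Sum.inl i))) := rfl

set_option maxHeartbeats 1000000 in
open Module in
lemma forward {lam mu : ℝ} (hmu : 0 < mu) (hlm : 0 < 2 * mu + 3 * lam)
    {ν : Fin 3 → ℝ} (hν : ν 0 ^ 2 + ν 1 ^ 2 + ν 2 ^ 2 = 1) (hν0 : ∀ i : Fin 3, ν i ≠ 0)
    {M : Matrix I9 I9 ℝ} (hMsymm : M.IsSymm)
    (hadm : IsAdmissible (Anu lam mu ν) M) :
    ∃ S₁ S₂ : Matrix (Fin 3) (Fin 3) ℝ, S₁.PosDef ∧ S₂ᵀ = -S₂ ∧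
      IsUnit (S₁ + S₂).det ∧ IsUnit (S₁ - S₂).det ∧
      ∀ (v : Fin 3 → ℝ) (σ : Matrix (Fin 3) (Fin 3) ℝ), σ.IsSymm →
        (((Anu lam mu ν) + M).mulVec (Uvec lam mu v σ) = 0 ↔
            (S₁ + S₂).mulVec v - σ.mulVec ν = 0) ∧
        (((Anu lam mu ν) - M).mulVec (Uvec lam mu v σ) = 0 ↔
            (S₁ - S₂).mulVec v + σ.mulVec ν = 0) := by
  obtain ⟨-, hpsd, hker, hsup⟩ := hadm
  set A := Anu lam mu ν with hA
  set Φ := PhiMap lam mu ν with hΦdef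
  set Vp := LinearMap.ker (A - M).mulVecLin with hVp
  set Vm := LinearMap.ker (A + M).mulVecLin with hVm
  have hAsymm := Anu_isSymm lam mu ν
  -- membership in Vp/Vm via mulVec
  have memVp' : ∀ x, x ∈ Vp ↔ M.mulVec x = A.mulVec x := by
    intro x
    rw [hVp, LinearMap.mem_ker, Matrix.mulVecLin_apply, Matrix.sub_mulVec]
    constructor
    · intro h; funext i; have := congrFun h i
      simp only [Pi.sub_apply, Pi.zero_apply] at this ⊢; linarith
    · intro h; funext i; have := congrFun h i
      simp only [Pi.sub_apply, Pi.zero_apply] at this ⊢; linarith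
  have memVm' : ∀ x, x ∈ Vm ↔ M.mulVec x = -(A.mulVec x) := by
    intro x
    rw [hVm, LinearMap.mem_ker, Matrix.mulVecLin_apply, Matrix.add_mulVec]
    constructor
    · intro h; funext i; have := congrFun h i
      simp only [Pi.add_apply, Pi.zero_apply, Pi.neg_apply] at this ⊢; linarith
    · intro h; funext i; have := congrFun h i
      simp only [Pi.add_apply, Pi.zero_apply, Pi.neg_apply] at this ⊢; linarith
  -- kernel of A is inside Vp and Vm
  have kerA_mem : ∀ x, A.mulVec x = 0 → x ∈ Vp ∧ x ∈ Vm := by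
    intro x h
    have hm := hker x h
    exact ⟨(memVp' x).mpr (by rw [hm, h]), (memVm' x).mpr (by rw [hm, h]; simp)⟩
  -- ker Φ ⊆ ker A
  have kerPhi : ∀ x, Φ x = 0 → A.mulVec x = 0 := by
    intro x h
    have h1 : (fun i => x (Sum.inl i)) = 0 := congrArg Prod.fst h
    have h2 : (fun i => -((A.mulVec x) (Sum.inl i))) = 0 := congrArg Prod.snd h
    refine (kerA_iff hmu hlm hν0 x).mpr ⟨h1, ?_⟩
    funext i; have := congrFun h2 i
    simp only [Pi.zero_apply, neg_eq_zero] at this; exact this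
  -- and conversely
  have kerA_phi : ∀ x, A.mulVec x = 0 → Φ x = 0 := by
    intro x h
    obtain ⟨h1, h2⟩ := (kerA_iff hmu hlm hν0 x).mp h
    rw [PhiMap_apply]
    refine Prod.ext h1 ?_
    funext i; have := congrFun h2 i
    simp only [Pi.zero_apply] at this ⊢; rw [this]; simp
  -- value of Φ on Uvec
  have PhiU : ∀ (v : Fin 3 → ℝ) (σ : Matrix (Fin 3) (Fin 3) ℝ), σ.IsSymm →
      Φ (Uvec lam mu v σ) = (v, σ.mulVec ν) := by
    intro v σ hσ
    rw [PhiMap_apply]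
    refine Prod.ext rfl ?_
    funext i
    have := congrFun (AU_inl hmu hlm ν v hσ) i
    simp only [Pi.neg_apply] at this ⊢
    rw [this]; simp
  have PhiSurj : Function.Surjective Φ := by
    rintro ⟨p, q⟩
    exact ⟨Uvec lam mu p (sigw ν q),
      by rw [PhiU p _ (sigw_isSymm ν q), sigw_mulVec hν q]⟩
  set Gp := Submodule.map Φ Vp with hGp
  set Gm := Submodule.map Φ Vm with hGm
  have memVp : ∀ x, x ∈ Vp ↔ Φ x ∈ Gp := by
    intro x
    constructor
    · intro h; exact Submodule.mem_map_of_mem h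
    · rintro ⟨y, hy, hxy⟩
      have hxy' : Φ (y - x) = 0 := by rw [map_sub, hxy, sub_self]
      have hmem := (kerA_mem _ (kerPhi _ hxy')).1
      have := Vp.sub_mem hy hmem
      simpa using this
  have memVm : ∀ x, x ∈ Vm ↔ Φ x ∈ Gm := by
    intro x
    constructor
    · intro h; exact Submodule.mem_map_of_mem h
    · rintro ⟨y, hy, hxy⟩
      have hxy' : Φ (y - x) = 0 := by rw [map_sub, hxy, sub_self]
      have hmem := (kerA_mem _ (kerPhi _ hxy')).2
      have := Vm.sub_mem hy hmem
      simpa using this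
  -- vertical vectors die
  have vertP : ∀ x ∈ Vp, (fun i => x (Sum.inl i)) = 0 → A.mulVec x = 0 := by
    intro x hx h0
    have hMx : M.mulVec x = A.mulVec x := (memVp' x).mp hx
    have hq : x ⬝ᵥ M.mulVec x = 0 := by
      rw [hMx, dotProduct_comm, dotA lam mu ν x x, h0]
      simp
    have hMx0 : M.mulVec x = 0 := by
      refine (hpsd.dotProduct_mulVec_zero_iff x).mp ?_
      simpa using hq
    rw [← hMx]; exact hMx0
  have vertM : ∀ x ∈ Vm, (fun i => x (Sum.inl i)) = 0 → A.mulVec x = 0 := by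
    intro x hx h0
    have hMx : M.mulVec x = -(A.mulVec x) := (memVm' x).mp hx
    have hq : x ⬝ᵥ M.mulVec x = 0 := by
      rw [hMx, dotProduct_neg, dotProduct_comm, dotA lam mu ν x x, h0]
      simp
    have hMx0 : M.mulVec x = 0 := by
      refine (hpsd.dotProduct_mulVec_zero_iff x).mp ?_
      simpa using hq
    have := hMx.symm.trans hMx0
    funext i; have h := congrFun this i
    simp only [Pi.neg_apply, Pi.zero_apply] at h ⊢
    linarith
  have graphP : ∀ p q : Fin 3 → ℝ, (p, q) ∈ Gp → p = 0 → q = 0 := by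
    rintro p q ⟨x, hx, hΦ⟩ hp
    have h1 : (fun i => x (Sum.inl i)) = p := congrArg Prod.fst hΦ
    have h2 : (fun i => -((A.mulVec x) (Sum.inl i))) = q := congrArg Prod.snd hΦ
    have hA0 := vertP x hx (by rw [h1, hp])
    rw [← h2]; funext i
    rw [congrFun hA0 (Sum.inl i)]; simp
  have graphM : ∀ p q : Fin 3 → ℝ, (p, q) ∈ Gm → p = 0 → q = 0 := by
    rintro p q ⟨x, hx, hΦ⟩ hp
    have h1 : (fun i => x (Sum.inl i)) = p := congrArg Prod.fst hΦ
    have h2 : (fun i => -((A.mulVec x) (Sum.inl i))) = q := congrArg Prod.snd hΦ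
    have hA0 := vertM x hx (by rw [h1, hp])
    rw [← h2]; funext i
    rw [congrFun hA0 (Sum.inl i)]; simp
  -- first projections restricted to Gp, Gm
  set fp : Gp →ₗ[ℝ] (Fin 3 → ℝ) := (LinearMap.fst ℝ _ _).comp Gp.subtype with hfp
  set fm : Gm →ₗ[ℝ] (Fin 3 → ℝ) := (LinearMap.fst ℝ _ _).comp Gm.subtype with hfm
  have fp_inj : Function.Injective fp := by
    rw [← LinearMap.ker_eq_bot, Submodule.eq_bot_iff]
    rintro ⟨⟨p, q⟩, hw⟩ h
    have hp : p = 0 := h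
    exact Subtype.ext (Prod.ext hp (graphP p q hw hp))
  have fm_inj : Function.Injective fm := by
    rw [← LinearMap.ker_eq_bot, Submodule.eq_bot_iff]
    rintro ⟨⟨p, q⟩, hw⟩ h
    have hp : p = 0 := h
    exact Subtype.ext (Prod.ext hp (graphM p q hw hp))
  have hrank3 : finrank ℝ (Fin 3 → ℝ) = 3 := by
    rw [Module.finrank_fintype_fun_eq_card]; simp
  have finGp : finrank ℝ Gp ≤ 3 := by
    have := LinearMap.finrank_le_finrank_of_injective fp_inj
    rwa [hrank3] at this
  have finGm : finrank ℝ Gm ≤ 3 := by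
    have := LinearMap.finrank_le_finrank_of_injective fm_inj
    rwa [hrank3] at this
  have hsupG : Gp ⊔ Gm = ⊤ := by
    rw [hGp, hGm, ← Submodule.map_sup, hsup, Submodule.map_top,
      LinearMap.range_eq_top.mpr PhiSurj]
  have hsum6 : 6 ≤ finrank ℝ Gp + finrank ℝ Gm := by
    have h := Submodule.finrank_sup_add_finrank_inf_eq Gp Gm
    rw [hsupG, finrank_top, Module.finrank_prod, hrank3] at h
    omega
  have dGp : finrank ℝ Gp = 3 := by omega
  have dGm : finrank ℝ Gm = 3 := by omega
  have fp_surj : Function.Surjective fp :=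
    (LinearMap.injective_iff_surjective_of_finrank_eq_finrank
      (by rw [dGp, hrank3])).mp fp_inj
  have fm_surj : Function.Surjective fm :=
    (LinearMap.injective_iff_surjective_of_finrank_eq_finrank
      (by rw [dGm, hrank3])).mp fm_inj
  set ep := LinearEquiv.ofBijective fp ⟨fp_inj, fp_surj⟩ with hep
  set em := LinearEquiv.ofBijective fm ⟨fm_inj, fm_surj⟩ with hem
  set tp : (Fin 3 → ℝ) →ₗ[ℝ] (Fin 3 → ℝ) :=
    (LinearMap.snd ℝ _ _).comp (Gp.subtype.comp ep.symm.toLinearMap) with htp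
  set tm : (Fin 3 → ℝ) →ₗ[ℝ] (Fin 3 → ℝ) :=
    (LinearMap.snd ℝ _ _).comp (Gm.subtype.comp em.symm.toLinearMap) with htm
  set Tp := LinearMap.toMatrix' tp with hTpdef
  set Tm := LinearMap.toMatrix' tm with hTmdef
  have hTpv : ∀ p, Tp.mulVec p = tp p := by
    intro p
    rw [hTpdef, ← Matrix.toLin'_apply, Matrix.toLin'_toMatrix']
  have hTmv : ∀ p, Tm.mulVec p = tm p := by
    intro p
    rw [hTmdef, ← Matrix.toLin'_apply, Matrix.toLin'_toMatrix']
  have hTp : ∀ p q : Fin 3 → ℝ, ((p, q) ∈ Gp ↔ q = Tp.mulVec p) := by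
    intro p q
    have hval : ∀ r, ((ep.symm r : Gp) : (Fin 3 → ℝ) × (Fin 3 → ℝ)) = (r, tp r) := by
      intro r
      have h1 : fp (ep.symm r) = r := ep.apply_symm_apply r
      have h2 : ((ep.symm r : Gp) : (Fin 3 → ℝ) × (Fin 3 → ℝ)).1 = r := h1
      exact Prod.ext h2 rfl
    constructor
    · intro h
      have h1 : ep ⟨(p, q), h⟩ = p := rfl
      have h2 : ep.symm p = ⟨(p, q), h⟩ := ep.symm_apply_eq.mpr h1.symm
      have := hval p
      rw [h2] at this
      rw [hTpv]
      exact congrArg Prod.snd this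
    · intro h
      rw [h, hTpv]
      have := (ep.symm p).2
      rwa [hval p] at this
  have hTm : ∀ p q : Fin 3 → ℝ, ((p, q) ∈ Gm ↔ q = Tm.mulVec p) := by
    intro p q
    have hval : ∀ r, ((em.symm r : Gm) : (Fin 3 → ℝ) × (Fin 3 → ℝ)) = (r, tm r) := by
      intro r
      have h1 : fm (em.symm r) = r := em.apply_symm_apply r
      have h2 : ((em.symm r : Gm) : (Fin 3 → ℝ) × (Fin 3 → ℝ)).1 = r := h1
      exact Prod.ext h2 rfl
    constructor
    · intro h
      have h1 : em ⟨(p, q), h⟩ = p := rfl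
      have h2 : em.symm p = ⟨(p, q), h⟩ := em.symm_apply_eq.mpr h1.symm
      have := hval p
      rw [h2] at this
      rw [hTmv]
      exact congrArg Prod.snd this
    · intro h
      rw [h, hTmv]
      have := (em.symm p).2
      rwa [hval p] at this
  clear_value Tp Tm
  clear_value tp tm
  clear_value em ep
  clear_value fm fp
  -- sign conditions
  have signm : ∀ p : Fin 3 → ℝ, 0 ≤ p ⬝ᵥ (Tm.mulVec p) := by
    intro p
    obtain ⟨x, hx, hΦ⟩ := (hTm p (Tm.mulVec p)).mpr rfl
    have h1 : (fun i => x (Sum.inl i)) = p := congrArg Prod.fst hΦ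
    have h2 : (fun i => -((A.mulVec x) (Sum.inl i))) = Tm.mulVec p := congrArg Prod.snd hΦ
    have h2' : (fun i => ((A.mulVec x) (Sum.inl i))) = -(Tm.mulVec p) := by
      funext i; have := congrFun h2 i
      simp only [Pi.neg_apply] at this ⊢; linarith
    have hMx : M.mulVec x = -(A.mulVec x) := (memVm' x).mp hx
    have hq0 : 0 ≤ x ⬝ᵥ M.mulVec x := by simpa using hpsd.dotProduct_mulVec_nonneg x
    have c1 : x ⬝ᵥ M.mulVec x = -(x ⬝ᵥ A.mulVec x) := by rw [hMx, dotProduct_neg]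
    have c2 : x ⬝ᵥ A.mulVec x = (A.mulVec x) ⬝ᵥ x := dotProduct_comm _ _
    have e1 : (A.mulVec x) ⬝ᵥ x = (-(Tm.mulVec p)) ⬝ᵥ p + p ⬝ᵥ (-(Tm.mulVec p)) := by
      rw [dotA lam mu ν x x, h1, h2']
    have c3 : (-(Tm.mulVec p)) ⬝ᵥ p = -(p ⬝ᵥ Tm.mulVec p) := by
      rw [neg_dotProduct, dotProduct_comm]
    have c4 : p ⬝ᵥ (-(Tm.mulVec p)) = -(p ⬝ᵥ Tm.mulVec p) := dotProduct_neg _ _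
    linarith
  have signp : ∀ p : Fin 3 → ℝ, p ⬝ᵥ (Tp.mulVec p) ≤ 0 := by
    intro p
    obtain ⟨x, hx, hΦ⟩ := (hTp p (Tp.mulVec p)).mpr rfl
    have h1 : (fun i => x (Sum.inl i)) = p := congrArg Prod.fst hΦ
    have h2 : (fun i => -((A.mulVec x) (Sum.inl i))) = Tp.mulVec p := congrArg Prod.snd hΦ
    have h2' : (fun i => ((A.mulVec x) (Sum.inl i))) = -(Tp.mulVec p) := by
      funext i; have := congrFun h2 i
      simp only [Pi.neg_apply] at this ⊢; linarith
    have hMx : M.mulVec x = A.mulVec x := (memVp' x).mp hx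
    have hq0 : 0 ≤ x ⬝ᵥ M.mulVec x := by simpa using hpsd.dotProduct_mulVec_nonneg x
    have c1 : x ⬝ᵥ M.mulVec x = (A.mulVec x) ⬝ᵥ x := by
      rw [hMx]; exact dotProduct_comm _ _
    have e1 : (A.mulVec x) ⬝ᵥ x = (-(Tp.mulVec p)) ⬝ᵥ p + p ⬝ᵥ (-(Tp.mulVec p)) := by
      rw [dotA lam mu ν x x, h1, h2']
    have c3 : (-(Tp.mulVec p)) ⬝ᵥ p = -(p ⬝ᵥ Tp.mulVec p) := by
      rw [neg_dotProduct, dotProduct_comm]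
    have c4 : p ⬝ᵥ (-(Tp.mulVec p)) = -(p ⬝ᵥ Tp.mulVec p) := dotProduct_neg _ _
    linarith
  -- transpose relation
  have hbil : ∀ p p', (Tp.mulVec p) ⬝ᵥ p' + p ⬝ᵥ (Tm.mulVec p') = 0 := by
    intro p p'
    obtain ⟨x, hx, hΦx⟩ := (hTp p (Tp.mulVec p)).mpr rfl
    obtain ⟨y, hy, hΦy⟩ := (hTm p' (Tm.mulVec p')).mpr rfl
    have hx1 : (fun i => x (Sum.inl i)) = p := congrArg Prod.fst hΦx
    have hx2 : (fun i => -((A.mulVec x) (Sum.inl i))) = Tp.mulVec p := congrArg Prod.snd hΦx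
    have hx2' : (fun i => ((A.mulVec x) (Sum.inl i))) = -(Tp.mulVec p) := by
      funext i; have := congrFun hx2 i
      simp only [Pi.neg_apply] at this ⊢; linarith
    have hy1 : (fun i => y (Sum.inl i)) = p' := congrArg Prod.fst hΦy
    have hy2 : (fun i => -((A.mulVec y) (Sum.inl i))) = Tm.mulVec p' := congrArg Prod.snd hΦy
    have hy2' : (fun i => ((A.mulVec y) (Sum.inl i))) = -(Tm.mulVec p') := by
      funext i; have := congrFun hy2 i
      simp only [Pi.neg_apply] at this ⊢; linarith
    have hMx : M.mulVec x = A.mulVec x := (memVp' x).mp hx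
    have hMy : M.mulVec y = -(A.mulVec y) := (memVm' y).mp hy
    have hsym : (M.mulVec x) ⬝ᵥ y = x ⬝ᵥ (M.mulVec y) := (symm_dot hMsymm x y).symm
    have hzero : (A.mulVec x) ⬝ᵥ y + x ⬝ᵥ (A.mulVec y) = 0 := by
      have h5 : (A.mulVec x) ⬝ᵥ y = -(x ⬝ᵥ (A.mulVec y)) := by
        rw [← hMx, hsym, hMy, dotProduct_neg]
      linarith
    have e1 : (A.mulVec x) ⬝ᵥ y = (-(Tp.mulVec p)) ⬝ᵥ p' + p ⬝ᵥ (-(Tm.mulVec p')) := by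
      rw [dotA lam mu ν x y, hx1, hx2', hy1, hy2']
    have e2 : (A.mulVec y) ⬝ᵥ x = (-(Tm.mulVec p')) ⬝ᵥ p + p' ⬝ᵥ (-(Tp.mulVec p)) := by
      rw [dotA lam mu ν y x, hy1, hy2', hx1, hx2']
    have e3 : x ⬝ᵥ (A.mulVec y) = (A.mulVec y) ⬝ᵥ x := dotProduct_comm _ _
    have c1 : (-(Tp.mulVec p)) ⬝ᵥ p' = -((Tp.mulVec p) ⬝ᵥ p') := neg_dotProduct _ _
    have c2 : p ⬝ᵥ (-(Tm.mulVec p')) = -(p ⬝ᵥ (Tm.mulVec p')) := dotProduct_neg _ _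
    have c3 : (-(Tm.mulVec p')) ⬝ᵥ p = -((Tm.mulVec p') ⬝ᵥ p) := neg_dotProduct _ _
    have c4 : p' ⬝ᵥ (-(Tp.mulVec p)) = -(p' ⬝ᵥ (Tp.mulVec p)) := dotProduct_neg _ _
    have c5 : (Tm.mulVec p') ⬝ᵥ p = p ⬝ᵥ (Tm.mulVec p') := dotProduct_comm _ _
    have c6 : p' ⬝ᵥ (Tp.mulVec p) = (Tp.mulVec p) ⬝ᵥ p' := dotProduct_comm _ _
    linarith
  have hTrans : Tpᵀ = -Tm := bilinear_transpose hbil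
  have hTe : ∀ i j, Tp j i = -(Tm i j) := by
    intro i j
    have := congrFun (congrFun hTrans i) j
    simpa [Matrix.transpose_apply] using this
  -- injectivity of Tp - Tm
  have hinj : ∀ p, Tp.mulVec p = Tm.mulVec p → p = 0 := by
    intro p h
    obtain ⟨x, hx, hΦx⟩ := (hTp p (Tp.mulVec p)).mpr rfl
    obtain ⟨y, hy, hΦy⟩ := (hTm p (Tm.mulVec p)).mpr rfl
    have hΦeq : Φ x = Φ y := by rw [hΦx, hΦy, h]
    have hxy : Φ (x - y) = 0 := by rw [map_sub, hΦeq, sub_self]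
    have hAxy := kerPhi _ hxy
    have hyVp : y ∈ Vp := by
      have hmem := (kerA_mem _ hAxy).1
      have := Vp.sub_mem hx hmem
      simpa using this
    have hAy : A.mulVec y = 0 := by
      have h1 := (memVp' y).mp hyVp
      have h2 := (memVm' y).mp hy
      funext i
      have := congrFun (h1.symm.trans h2) i
      simp only [Pi.neg_apply, Pi.zero_apply] at this ⊢
      linarith
    have hΦy0 := kerA_phi y hAy
    exact congrArg Prod.fst (hΦy.symm.trans hΦy0)
  -- define S₁ and S₂
  set S₁ := (1/2 : ℝ) • (Tm - Tp) with hS₁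
  set S₂ := (1/2 : ℝ) • (Tm + Tp) with hS₂
  have hsum : S₁ + S₂ = Tm := by
    rw [hS₁, hS₂]; ext i j
    simp only [Matrix.add_apply, Matrix.smul_apply, Matrix.sub_apply, smul_eq_mul]
    ring
  have hdiff : S₁ - S₂ = -Tp := by
    rw [hS₁, hS₂]; ext i j
    simp only [Matrix.sub_apply, Matrix.smul_apply, Matrix.add_apply, Matrix.neg_apply,
      smul_eq_mul]
    ring
  have hS₁v : ∀ p, S₁.mulVec p = (1/2 : ℝ) • (Tm.mulVec p - Tp.mulVec p) := by
    intro p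
    rw [hS₁, Matrix.smul_mulVec, Matrix.sub_mulVec]
  have hq : ∀ p : Fin 3 → ℝ,
      p ⬝ᵥ (S₁.mulVec p) = 1/2 * (p ⬝ᵥ Tm.mulVec p) - 1/2 * (p ⬝ᵥ Tp.mulVec p) := by
    intro p
    rw [hS₁v p, dotProduct_smul, dotProduct_sub]
    simp only [smul_eq_mul]
    ring
  have hS₁psd_ineq : ∀ p, 0 ≤ p ⬝ᵥ S₁.mulVec p := by
    intro p
    rw [hq p]
    have := signm p
    have := signp p
    linarith
  have hS₁herm : S₁.IsHermitian := by
    rw [Matrix.IsHermitian, Matrix.conjTranspose_eq_transpose_of_trivial]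
    ext i j
    simp only [hS₁, Matrix.transpose_apply, Matrix.smul_apply, Matrix.sub_apply, smul_eq_mul]
    have h1 := hTe i j
    have h2 := hTe j i
    linarith
  have hS₁psd : S₁.PosSemidef := .of_dotProduct_mulVec_nonneg hS₁herm (fun p => by simpa using hS₁psd_ineq p)
  have hS₁ker : ∀ p, S₁.mulVec p = 0 → p = 0 := by
    intro p h
    apply hinj
    rw [hS₁v p] at h
    funext i
    have := congrFun h i
    simp only [Pi.smul_apply, Pi.sub_apply, smul_eq_mul, Pi.zero_apply] at this
    linarith
  have hS₁zero : ∀ p, p ⬝ᵥ S₁.mulVec p = 0 → p = 0 := by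
    intro p h
    exact hS₁ker p ((hS₁psd.dotProduct_mulVec_zero_iff p).mp (by simpa using h))
  have hS₁def : S₁.PosDef := by
    refine .of_dotProduct_mulVec_pos hS₁herm fun p hp => ?_
    have h0 : p ⬝ᵥ S₁.mulVec p ≠ 0 := fun hz => hp (hS₁zero p hz)
    have h1 := hS₁psd_ineq p
    have h2 : 0 < p ⬝ᵥ S₁.mulVec p := lt_of_le_of_ne h1 (Ne.symm h0)
    simpa using h2
  have hS₂skew : S₂ᵀ = -S₂ := by
    ext i j
    simp only [hS₂, Matrix.transpose_apply, Matrix.smul_apply, Matrix.add_apply,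
      Matrix.neg_apply, smul_eq_mul]
    have h1 := hTe i j
    have h2 := hTe j i
    linarith
  have hTp2 : Tp = -Tmᵀ := by
    ext i j
    simp only [Matrix.neg_apply, Matrix.transpose_apply]
    exact hTe j i
  have hTm2 : Tm = -Tpᵀ := by
    ext i j
    simp only [Matrix.neg_apply, Matrix.transpose_apply]
    have := hTe i j
    linarith
  have hdet1 : IsUnit (S₁ + S₂).det := by
    rw [hsum, isUnit_iff_ne_zero]
    intro hdet
    obtain ⟨p, hp0, hp⟩ := (Matrix.exists_mulVec_eq_zero_iff).mpr hdet
    apply hp0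
    have c1 : p ⬝ᵥ Tm.mulVec p = 0 := by rw [hp]; simp
    have c2 : p ⬝ᵥ Tp.mulVec p = 0 := by
      rw [hTp2, Matrix.neg_mulVec, dotProduct_neg, dot_transpose, hp]
      simp
    apply hS₁zero
    rw [hq p, c1, c2]
    ring
  have hdet2 : IsUnit (S₁ - S₂).det := by
    rw [hdiff, isUnit_iff_ne_zero]
    intro hdet
    obtain ⟨p, hp0, hp⟩ := (Matrix.exists_mulVec_eq_zero_iff).mpr hdet
    apply hp0
    have hp' : Tp.mulVec p = 0 := by
      have := congrArg Neg.neg hp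
      simpa [Matrix.neg_mulVec] using this
    have c2 : p ⬝ᵥ Tp.mulVec p = 0 := by rw [hp']; simp
    have c1 : p ⬝ᵥ Tm.mulVec p = 0 := by
      rw [hTm2, Matrix.neg_mulVec, dotProduct_neg, dot_transpose, hp']
      simp
    apply hS₁zero
    rw [hq p, c1, c2]
    ring
  refine ⟨S₁, S₂, hS₁def, hS₂skew, hdet1, hdet2, ?_⟩
  intro v σ hσ
  have hΦU := PhiU v σ hσ
  constructor
  · have hmem : (A + M).mulVec (Uvec lam mu v σ) = 0 ↔ Uvec lam mu v σ ∈ Vm := by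
      rw [hVm, LinearMap.mem_ker, Matrix.mulVecLin_apply]
    rw [hmem, memVm _, hΦU, hTm v (σ.mulVec ν), hsum, sub_eq_zero]
    exact ⟨fun h => h.symm, fun h => h.symm⟩
  · have hmem : (A - M).mulVec (Uvec lam mu v σ) = 0 ↔ Uvec lam mu v σ ∈ Vp := by
      rw [hVp, LinearMap.mem_ker, Matrix.mulVecLin_apply]
    rw [hmem, memVp _, hΦU, hTp v (σ.mulVec ν), hdiff, Matrix.neg_mulVec]
    constructor
    · intro h
      rw [h]
      simp
    · intro h
      funext i
      have := congrFun h i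
      simp only [Pi.add_apply, Pi.neg_apply, Pi.zero_apply] at this
      linarith

theorem stmt11 (lam mu : ℝ) (hmu : 0 < mu) (hlm : 0 < 2 * mu + 3 * lam) (ν : Fin 3 → ℝ)
    (hν : ν 0 ^ 2 + ν 1 ^ 2 + ν 2 ^ 2 = 1)
    (hν0 : ∀ i : Fin 3, ν i ≠ 0)
    (M : Matrix I9 I9 ℝ) (hMsymm : M.IsSymm) :
    IsAdmissible (Anu lam mu ν) M ↔
      ∃ S₁ S₂ : Matrix (Fin 3) (Fin 3) ℝ, S₁.PosDef ∧ S₂ᵀ = -S₂ ∧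
        IsUnit (S₁ + S₂).det ∧ IsUnit (S₁ - S₂).det ∧
        ∀ (v : Fin 3 → ℝ) (σ : Matrix (Fin 3) (Fin 3) ℝ), σ.IsSymm →
          ((Anu lam mu ν + M).mulVec (Uvec lam mu v σ) = 0 ↔
              (S₁ + S₂).mulVec v - σ.mulVec ν = 0) ∧
          ((Anu lam mu ν - M).mulVec (Uvec lam mu v σ) = 0 ↔
              (S₁ - S₂).mulVec v + σ.mulVec ν = 0) := by
  constructor
  · intro h
    exact forward hmu hlm hν hν0 hMsymm h
  · rintro ⟨S₁, S₂, h1, h2, h3, h4, H⟩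
    exact backward hmu hlm hν hν0 hMsymm S₁ S₂ h1 h2 h3 h4 H
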